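/- Suppose h₁, h₂ ∈ C₀(M,ℂ) are nonnegative and both α-proper. Then the product h₁h₂ is α-proper, and its strict limit F ∈ C_b(M,ℂ) (the function with ‖k·p_λ(h₁h₂) − k·F‖_∞ → 0 for all k ∈ C₀(M,ℂ)) satisfies: F(x•m) = F(m) for all x ∈ G and m ∈ M, and for every ε > 0 there is a compact set K ⊆ M such that |F(m)| ≤ ε for every m ∈ M whose orbit {x•m : x ∈ G} does not meet K. -/

import Mathlib

open MeasureTheory Filter Topology
open scoped ZeroAtInfty BoundedContinuousFunction ComplexOrder

/-- The directed set `ℬ(G)` of bounded measurable compactly supported functions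
`λ : G → ℝ` with `0 ≤ λ ≤ 1`, ordered pointwise. -/
abbrev RieffelB (G : Type*) [TopologicalSpace G] [MeasurableSpace G] : Type _ :=
  {lam : G → ℝ // Measurable lam ∧ HasCompactSupport lam ∧ 0 ≤ lam ∧ lam ≤ 1}

/-- `p_λ(f)(m) = ∫ λ(x) f(x⁻¹ • m) dx`. -/
noncomputable def pLamC0 {G : Type*} [Group G] [TopologicalSpace G] [MeasurableSpace G]
    {M : Type*} [TopologicalSpace M] [MulAction G M]
    (μ : Measure G) (lam : RieffelB G) (f : C₀(M, ℂ)) : M → ℂ :=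
  fun m => ∫ x, ((lam.1 x : ℝ) : ℂ) * f (x⁻¹ • m) ∂μ

/-- A nonnegative `h ∈ C₀(M, ℂ)` is `α`-proper if there is `F ∈ C_b(M, ℂ)` such that
for every `k ∈ C₀(M, ℂ)` the net `(k · p_λ(h))_{λ ∈ ℬ(G)}` converges uniformly to `k · F`. -/
def IsProperC0 {G : Type*} [Group G] [TopologicalSpace G] [MeasurableSpace G]
    {M : Type*} [TopologicalSpace M] [MulAction G M]
    (μ : Measure G) (h : C₀(M, ℂ)) : Prop :=
  ∃ F : M →ᵇ ℂ, ∀ k : C₀(M, ℂ), ∀ ε > (0 : ℝ), ∃ lam₀ : RieffelB G,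
    ∀ lam : RieffelB G, lam₀ ≤ lam →
      ∀ m : M, ‖k m * pLamC0 μ lam h m - k m * F m‖ ≤ ε

set_option linter.unusedSectionVars false
set_option linter.unusedVariables false
set_option maxHeartbeats 1000000

open Set

namespace RieffelAux

section Basic

variable {G : Type*} [Group G] [TopologicalSpace G] [IsTopologicalGroup G]
    [LocallyCompactSpace G] [MeasurableSpace G] [BorelSpace G]
    {M : Type*} [TopologicalSpace M] [LocallyCompactSpace M] [T2Space M]
    [MulAction G M] [ContinuousSMul G M]
    (μ : Measure G) [μ.IsHaarMeasure]

/-- real-valued version of `pLamC0`. -/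
noncomputable def qR (lam : RieffelB G) (h : C₀(M, ℂ)) (m : M) : ℝ :=
  ∫ x, lam.1 x * (h (x⁻¹ • m)).re ∂μ

lemma norm_apply_le (h : C₀(M, ℂ)) (m : M) : ‖h m‖ ≤ ‖h‖ := by
  rw [← ZeroAtInftyContinuousMap.norm_toBCF_eq_norm]
  exact h.toBCF.norm_coe_le_norm m

lemma lam_nonneg (lam : RieffelB G) (x : G) : (0:ℝ) ≤ lam.1 x := lam.2.2.2.1 x

lemma lam_le_one (lam : RieffelB G) (x : G) : lam.1 x ≤ (1:ℝ) := lam.2.2.2.2 x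

lemma cont_aux (h : C₀(M, ℂ)) (m : M) : Continuous fun x : G => (h (x⁻¹ • m)).re :=
  Complex.continuous_re.comp (h.continuous.comp (continuous_inv.smul continuous_const))

lemma bound_aux (lam : RieffelB G) (h : C₀(M, ℂ)) (m : M) (x : G) :
    ‖lam.1 x * (h (x⁻¹ • m)).re‖ ≤ (tsupport lam.1).indicator (fun _ => ‖h‖) x := by
  by_cases hx : x ∈ tsupport lam.1
  · rw [Set.indicator_of_mem hx]
    have h0 : (0:ℝ) ≤ lam.1 x := lam_nonneg lam x
    have h1 : |lam.1 x| ≤ 1 := abs_le.2 ⟨by linarith, lam_le_one lam x⟩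
    calc ‖lam.1 x * (h (x⁻¹ • m)).re‖ = |lam.1 x| * |(h (x⁻¹ • m)).re| := abs_mul _ _
      _ ≤ 1 * ‖h (x⁻¹ • m)‖ := by
          apply mul_le_mul h1 ?_ (abs_nonneg _) zero_le_one
          exact Complex.abs_re_le_norm _
      _ ≤ ‖h‖ := by rw [one_mul]; exact norm_apply_le h _
  · rw [Set.indicator_of_notMem hx, image_eq_zero_of_notMem_tsupport hx, zero_mul]
    simp

lemma bound_integrable (lam : RieffelB G) (h : C₀(M, ℂ)) :
    Integrable ((tsupport lam.1).indicator (fun _ => ‖h‖)) μ := by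
  rw [integrable_indicator_iff (isClosed_tsupport lam.1).measurableSet]
  exact integrableOn_const lam.2.2.1.measure_lt_top.ne

lemma integrable_qR (lam : RieffelB G) (h : C₀(M, ℂ)) (m : M) :
    Integrable (fun x => lam.1 x * (h (x⁻¹ • m)).re) μ := by
  refine (bound_integrable μ lam h).mono' ?_ (Eventually.of_forall (bound_aux lam h m))
  exact lam.2.1.aestronglyMeasurable.mul (cont_aux h m).aestronglyMeasurable

lemma qR_nonneg (lam : RieffelB G) (h : C₀(M, ℂ)) (hpos : ∀ m, 0 ≤ h m) (m : M) :
    0 ≤ qR μ lam h m :=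
  integral_nonneg fun x => mul_nonneg (lam_nonneg lam x) (Complex.nonneg_iff.1 (hpos _)).1

lemma qR_mono (h : C₀(M, ℂ)) (hpos : ∀ m, 0 ≤ h m) {lam lam' : RieffelB G}
    (hle : lam ≤ lam') (m : M) : qR μ lam h m ≤ qR μ lam' h m :=
  integral_mono (integrable_qR μ lam h m) (integrable_qR μ lam' h m) fun x =>
    mul_le_mul_of_nonneg_right (hle x) (Complex.nonneg_iff.1 (hpos _)).1

lemma pLamC0_eq (lam : RieffelB G) (h : C₀(M, ℂ)) (hpos : ∀ m, 0 ≤ h m) (m : M) :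
    pLamC0 μ lam h m = ((qR μ lam h m : ℝ) : ℂ) := by
  have hfun : ∀ x : G, ((lam.1 x : ℝ) : ℂ) * h (x⁻¹ • m)
      = ((lam.1 x * (h (x⁻¹ • m)).re : ℝ) : ℂ) := by
    intro x
    have him : 0 = (h (x⁻¹ • m)).im := (Complex.nonneg_iff.1 (hpos _)).2
    push_cast
    congr 1
    exact Complex.ext (by simp) (by simp [← him])
  show (∫ x, ((lam.1 x : ℝ) : ℂ) * h (x⁻¹ • m) ∂μ) = _
  rw [show (fun x => ((lam.1 x : ℝ) : ℂ) * h (x⁻¹ • m))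
      = fun x => ((lam.1 x * (h (x⁻¹ • m)).re : ℝ) : ℂ) from funext hfun]
  exact integral_ofReal

/-- Continuity of `m ↦ qR μ lam h m`, via the generalized tube lemma. -/
lemma qR_continuous (lam : RieffelB G) (h : C₀(M, ℂ)) :
    Continuous fun m => qR μ lam h m := by
  rw [continuous_iff_continuousAt]
  intro m₀
  rw [ContinuousAt, Metric.tendsto_nhds]
  intro ε hε
  set K := tsupport lam.1 with hK
  have hKc : IsCompact K := lam.2.2.1
  set C : ℝ := (μ K).toReal + 1 with hC
  have hC0 : 0 < C := by positivity
  set δ : ℝ := ε / (2 * C) with hδ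
  have hδ0 : 0 < δ := by positivity
  -- the function p ↦ g p.1 p.2 - g p.1 m₀ is continuous
  have hg : Continuous fun p : G × M => (h (p.1⁻¹ • p.2)).re - (h (p.1⁻¹ • m₀)).re := by
    apply Continuous.sub
    · exact Complex.continuous_re.comp (h.continuous.comp
        ((continuous_inv.comp continuous_fst).smul continuous_snd))
    · exact Complex.continuous_re.comp (h.continuous.comp
        ((continuous_inv.comp continuous_fst).smul continuous_const))
  have hopen : IsOpen {p : G × M | |(h (p.1⁻¹ • p.2)).re - (h (p.1⁻¹ • m₀)).re| < δ} := by
    have : Continuous fun p : G × M => |(h (p.1⁻¹ • p.2)).re - (h (p.1⁻¹ • m₀)).re| :=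
      hg.abs
    exact isOpen_lt this continuous_const
  have hsub : K ×ˢ ({m₀} : Set M) ⊆
      {p : G × M | |(h (p.1⁻¹ • p.2)).re - (h (p.1⁻¹ • m₀)).re| < δ} := by
    rintro ⟨x, m⟩ ⟨-, hm⟩
    simp only [Set.mem_singleton_iff] at hm
    subst hm
    simpa using hδ0
  obtain ⟨U, V, hU, hV, hKU, hm₀V, hUV⟩ :=
    generalized_tube_lemma hKc isCompact_singleton hopen hsub
  have hVmem : V ∈ 𝓝 m₀ := hV.mem_nhds (hm₀V rfl)
  refine Filter.eventually_of_mem hVmem fun m hm => ?_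
  have key : ∀ x : G, ‖lam.1 x * (h (x⁻¹ • m)).re - lam.1 x * (h (x⁻¹ • m₀)).re‖ ≤
      K.indicator (fun _ => δ) x := by
    intro x
    by_cases hx : x ∈ K
    · rw [Set.indicator_of_mem hx]
      have hdiff : |(h (x⁻¹ • m)).re - (h (x⁻¹ • m₀)).re| < δ :=
        hUV (Set.mk_mem_prod (hKU hx) hm)
      have h0 : (0:ℝ) ≤ lam.1 x := lam_nonneg lam x
      have h1 : |lam.1 x| ≤ 1 := abs_le.2 ⟨by linarith, lam_le_one lam x⟩
      calc ‖lam.1 x * (h (x⁻¹ • m)).re - lam.1 x * (h (x⁻¹ • m₀)).re‖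
          = |lam.1 x| * |(h (x⁻¹ • m)).re - (h (x⁻¹ • m₀)).re| := by
            rw [← mul_sub]; exact abs_mul _ _
        _ ≤ 1 * δ := mul_le_mul h1 hdiff.le (abs_nonneg _) zero_le_one
        _ = δ := one_mul δ
    · rw [Set.indicator_of_notMem hx, image_eq_zero_of_notMem_tsupport hx]
      simp
  have hint : Integrable (K.indicator (fun _ => δ)) μ := by
    rw [integrable_indicator_iff (isClosed_tsupport lam.1).measurableSet]
    exact integrableOn_const hKc.measure_lt_top.ne
  have hsubint : qR μ lam h m - qR μ lam h m₀ =
      ∫ x, (lam.1 x * (h (x⁻¹ • m)).re - lam.1 x * (h (x⁻¹ • m₀)).re) ∂μ := by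
    rw [integral_sub (integrable_qR μ lam h m) (integrable_qR μ lam h m₀)]
    rfl
  rw [Real.dist_eq, hsubint]
  calc |∫ x, (lam.1 x * (h (x⁻¹ • m)).re - lam.1 x * (h (x⁻¹ • m₀)).re) ∂μ|
      ≤ ∫ x, K.indicator (fun _ => δ) x ∂μ := by
        rw [← Real.norm_eq_abs]
        exact norm_integral_le_of_norm_le hint (Eventually.of_forall key)
    _ = δ * (μ K).toReal := by
        rw [integral_indicator (isClosed_tsupport lam.1).measurableSet]
        simp [mul_comm]
        exact Or.inl rfl
    _ < ε := by
        rw [hδ]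
        rw [div_mul_eq_mul_div, div_lt_iff₀ (by positivity)]
        have h1 : (μ K).toReal < C := by rw [hC]; linarith
        calc ε * (μ K).toReal ≤ ε * C := by nlinarith [ENNReal.toReal_nonneg (a := μ K)]
          _ < ε * (2 * C) := by nlinarith

end Basic

section Lattice

variable {G : Type*} [Group G] [TopologicalSpace G] [IsTopologicalGroup G]
    [MeasurableSpace G] [BorelSpace G]

/-- the zero element of `RieffelB G`. -/
def lamZero (G : Type*) [TopologicalSpace G] [MeasurableSpace G] : RieffelB G :=
  ⟨fun _ => 0, measurable_const, by
    have : (fun _ : G => (0:ℝ)) = (0 : G → ℝ) := rfl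
    rw [HasCompactSupport, this, tsupport]
    rw [Function.support_zero, closure_empty]
    exact isCompact_empty,
    le_refl _, fun _ => zero_le_one⟩

/-- pointwise max of two elements of `RieffelB G`. -/
def lamSup (lam lam' : RieffelB G) : RieffelB G := by
  refine ⟨fun x => max (lam.1 x) (lam'.1 x), lam.2.1.max lam'.2.1, ?_, ?_, ?_⟩
  · have hsub : Function.support (fun x => max (lam.1 x) (lam'.1 x)) ⊆
        tsupport lam.1 ∪ tsupport lam'.1 := by
      intro x hx
      by_contra hc
      simp only [Set.mem_union, not_or] at hc
      exact Function.mem_support.mp hx (by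
        rw [image_eq_zero_of_notMem_tsupport hc.1, image_eq_zero_of_notMem_tsupport hc.2,
          max_self])
    exact IsCompact.of_isClosed_subset (lam.2.2.1.union lam'.2.2.1) (isClosed_tsupport _)
      (closure_minimal hsub ((isClosed_tsupport _).union (isClosed_tsupport _)))
  · exact fun x => le_max_of_le_left (lam.2.2.2.1 x)
  · exact fun x => max_le (lam.2.2.2.2 x) (lam'.2.2.2.2 x)

lemma le_lamSup_left (lam lam' : RieffelB G) : lam ≤ lamSup lam lam' :=
  fun x => le_max_left _ _

lemma le_lamSup_right (lam lam' : RieffelB G) : lam' ≤ lamSup lam lam' :=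
  fun x => le_max_right _ _

/-- left translation on `RieffelB G`. -/
def lamTrans (x : G) (lam : RieffelB G) : RieffelB G :=
  ⟨fun z => lam.1 (x * z), lam.2.1.comp (measurable_const_mul x),
    lam.2.2.1.comp_homeomorph (Homeomorph.mulLeft x),
    fun z => lam.2.2.2.1 (x * z), fun z => lam.2.2.2.2 (x * z)⟩

lemma lamTrans_lamTrans (x : G) (lam : RieffelB G) :
    lamTrans x (lamTrans x⁻¹ lam) = lam := by
  apply Subtype.ext
  funext z
  simp [lamTrans]

end Lattice

section Localizer

variable {M : Type*} [TopologicalSpace M] [LocallyCompactSpace M] [T2Space M]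

lemma exists_localizer {N : Set M} (hN : IsCompact N) :
    ∃ k : C₀(M, ℂ), ∀ m ∈ N, k m = 1 := by
  obtain ⟨f, hf1, -, hfc, -⟩ :=
    exists_continuous_one_zero_of_isCompact hN isClosed_empty (disjoint_empty _)
  have hz : Tendsto (fun m => ((f m : ℝ) : ℂ)) (cocompact M) (𝓝 0) := by
    refine Tendsto.congr' ?_
      (tendsto_const_nhds : Tendsto (fun _ : M => (0 : ℂ)) (cocompact M) (𝓝 0))
    refine Filter.eventuallyEq_of_mem
      (Filter.mem_cocompact.2 ⟨tsupport f, hfc, le_refl _⟩) fun m hm => ?_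
    simp only [Set.mem_compl_iff] at hm
    rw [image_eq_zero_of_notMem_tsupport hm]
    simp
  refine ⟨⟨⟨fun m => ((f m : ℝ) : ℂ), Complex.continuous_ofReal.comp f.continuous⟩, hz⟩, ?_⟩
  intro m hm
  have h1 : f m = 1 := hf1 hm
  show ((f m : ℝ) : ℂ) = 1
  rw [h1]
  simp

end Localizer

end RieffelAux

namespace RieffelAux

section Main

variable {G : Type*} [Group G] [TopologicalSpace G] [IsTopologicalGroup G]
    [LocallyCompactSpace G] [MeasurableSpace G] [BorelSpace G]
    {M : Type*} [TopologicalSpace M] [LocallyCompactSpace M] [T2Space M]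
    [MulAction G M] [ContinuousSMul G M]
    (μ : Measure G) [μ.IsHaarMeasure]

lemma qR_lamZero (h : C₀(M, ℂ)) (m : M) : qR μ (lamZero G) h m = 0 := by
  simp [qR, lamZero]

lemma re_mul (h₁ h₂ : C₀(M, ℂ)) (h₁pos : ∀ m, 0 ≤ h₁ m) (h₂pos : ∀ m, 0 ≤ h₂ m) (n : M) :
    ((h₁ * h₂) n).re = (h₁ n).re * (h₂ n).re := by
  have e1 : 0 = (h₁ n).im := (Complex.nonneg_iff.1 (h₁pos n)).2
  have e2 : 0 = (h₂ n).im := (Complex.nonneg_iff.1 (h₂pos n)).2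
  rw [ZeroAtInftyContinuousMap.mul_apply, Complex.mul_re, ← e1, ← e2]
  ring

/-- key product inequality. -/
lemma qR_mul_diff_le (h₁ h₂ : C₀(M, ℂ)) (h₁pos : ∀ m, 0 ≤ h₁ m) (h₂pos : ∀ m, 0 ≤ h₂ m)
    {lam lam'' : RieffelB G} (hle : lam ≤ lam'') (m : M) :
    qR μ lam'' (h₁ * h₂) m - qR μ lam (h₁ * h₂) m
      ≤ ‖h₂‖ * (qR μ lam'' h₁ m - qR μ lam h₁ m) := by
  rw [qR, qR, qR, qR,
    ← integral_sub (integrable_qR μ lam'' (h₁ * h₂) m) (integrable_qR μ lam (h₁ * h₂) m),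
    ← integral_sub (integrable_qR μ lam'' h₁ m) (integrable_qR μ lam h₁ m),
    ← integral_const_mul]
  apply integral_mono
  · exact (integrable_qR μ lam'' (h₁ * h₂) m).sub (integrable_qR μ lam (h₁ * h₂) m)
  · exact ((integrable_qR μ lam'' h₁ m).sub (integrable_qR μ lam h₁ m)).const_mul ‖h₂‖
  intro x
  simp only
  rw [re_mul h₁ h₂ h₁pos h₂pos]
  have hd : lam.1 x ≤ lam''.1 x := hle x
  have hre1 : 0 ≤ (h₁ (x⁻¹ • m)).re := (Complex.nonneg_iff.1 (h₁pos _)).1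
  have hre2 : (h₂ (x⁻¹ • m)).re ≤ ‖h₂‖ := by
    refine (Complex.re_le_norm _).trans ?_
    exact norm_apply_le h₂ _
  nlinarith [mul_nonneg (mul_nonneg (sub_nonneg.2 hd) hre1) (sub_nonneg.2 hre2)]

/-- equivariance under translation. -/
lemma qR_smul (lam : RieffelB G) (h : C₀(M, ℂ)) (x : G) (m : M) :
    qR μ lam h (x • m) = qR μ (lamTrans x lam) h m := by
  rw [qR, qR, ← integral_mul_left_eq_self (fun y => lam.1 y * (h (y⁻¹ • x • m)).re) x]
  congr 1
  funext z
  show lam.1 (x * z) * (h ((x * z)⁻¹ • x • m)).re = lam.1 (x * z) * (h (z⁻¹ • m)).re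
  congr 2
  rw [mul_inv_rev, mul_smul, inv_smul_smul]

/-- the basic facts about the strict limit `F₁` of a proper function. -/
lemma F1_facts (h₁ : C₀(M, ℂ)) (h₁pos : ∀ m, 0 ≤ h₁ m) (F₁ : M →ᵇ ℂ)
    (hF₁ : ∀ k : C₀(M, ℂ), ∀ ε > (0 : ℝ), ∃ lam₀ : RieffelB G,
      ∀ lam : RieffelB G, lam₀ ≤ lam →
        ∀ m : M, ‖k m * pLamC0 μ lam h₁ m - k m * F₁ m‖ ≤ ε)
    (m : M) : (F₁ m).im = 0 ∧ ∀ lam : RieffelB G, qR μ lam h₁ m ≤ (F₁ m).re := by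
  obtain ⟨k, hk⟩ := exists_localizer (isCompact_singleton : IsCompact {m})
  have hk1 : k m = 1 := hk m rfl
  have key : ∀ ε > (0 : ℝ), ∀ lam : RieffelB G, ∃ lam' : RieffelB G, lam ≤ lam' ∧
      ‖((qR μ lam' h₁ m : ℝ) : ℂ) - F₁ m‖ ≤ ε := by
    intro ε hε lam
    obtain ⟨lam₀, hlam₀⟩ := hF₁ k ε hε
    refine ⟨lamSup lam lam₀, le_lamSup_left _ _, ?_⟩
    have := hlam₀ (lamSup lam lam₀) (le_lamSup_right _ _) m
    rw [pLamC0_eq μ _ h₁ h₁pos m, hk1, one_mul, one_mul] at this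
    exact this
  constructor
  · refine abs_eq_zero.mp (le_antisymm (le_of_forall_pos_le_add fun ε hε => ?_) (abs_nonneg _))
    obtain ⟨lam', -, hlam'⟩ := key ε hε (lamZero G)
    have him : |(((qR μ lam' h₁ m : ℝ) : ℂ) - F₁ m).im| ≤ ε := by
      refine (Complex.abs_im_le_norm _).trans ?_
      exact hlam'
    simp only [Complex.sub_im, Complex.ofReal_im, zero_sub, abs_neg] at him
    linarith
  · intro lam
    refine le_of_forall_pos_le_add fun ε hε => ?_
    obtain ⟨lam', hle, hlam'⟩ := key ε hε lam
    have habs : ‖((qR μ lam' h₁ m : ℝ) : ℂ) - F₁ m‖ ≤ ε := by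
      exact hlam'
    have hre : |qR μ lam' h₁ m - (F₁ m).re| ≤ ε := by
      have h' := (Complex.abs_re_le_norm (((qR μ lam' h₁ m : ℝ) : ℂ) - F₁ m)).trans habs
      simpa using h'
    have hmono : qR μ lam h₁ m ≤ qR μ lam' h₁ m := qR_mono μ h₁ h₁pos hle m
    have := abs_le.1 hre
    linarith [this.2]

end Main

end RieffelAux

open RieffelAux

/-- If `h₁, h₂ ∈ C₀(M, ℂ)` are nonnegative and `α`-proper, then `h₁h₂` is
`α`-proper and its strict limit `F ∈ C_b(M, ℂ)` is `G`-invariant and "vanishes at infinity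
modulo `G`": for each `ε > 0` there is a compact `K ⊆ M` with `|F(m)| ≤ ε` whenever the
orbit of `m` misses `K`. -/
theorem stmt8
    {G : Type*} [Group G] [TopologicalSpace G] [IsTopologicalGroup G]
    [LocallyCompactSpace G] [MeasurableSpace G] [BorelSpace G]
    (μ : Measure G) [μ.IsHaarMeasure]
    {M : Type*} [TopologicalSpace M] [LocallyCompactSpace M] [T2Space M]
    [MulAction G M] [ContinuousSMul G M]
    (h₁ h₂ : C₀(M, ℂ))
    (h₁pos : ∀ m : M, 0 ≤ h₁ m) (h₂pos : ∀ m : M, 0 ≤ h₂ m)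
    (h₁proper : IsProperC0 μ h₁) (h₂proper : IsProperC0 μ h₂) :
    ∃ F : M →ᵇ ℂ,
      (∀ k : C₀(M, ℂ), ∀ ε > (0 : ℝ), ∃ lam₀ : RieffelB G,
        ∀ lam : RieffelB G, lam₀ ≤ lam →
          ∀ m : M, ‖k m * pLamC0 μ lam (h₁ * h₂) m - k m * F m‖ ≤ ε) ∧
      (∀ (x : G) (m : M), F (x • m) = F m) ∧
      (∀ ε > (0 : ℝ), ∃ K : Set M, IsCompact K ∧
        ∀ m : M, (∀ x : G, x • m ∉ K) → ‖F m‖ ≤ ε) := by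

  classical
  obtain ⟨F₁, hF₁⟩ := h₁proper
  set h₁₂ : C₀(M, ℂ) := h₁ * h₂ with hh₁₂
  have h₁₂pos : ∀ m, 0 ≤ h₁₂ m := by
    intro m
    rw [hh₁₂, ZeroAtInftyContinuousMap.mul_apply]
    exact mul_nonneg (h₁pos m) (h₂pos m)
  have fact : ∀ m, (F₁ m).im = 0 ∧ ∀ lam : RieffelB G, qR μ lam h₁ m ≤ (F₁ m).re :=
    F1_facts μ h₁ h₁pos F₁ hF₁
  set F₁re : M → ℝ := fun m => (F₁ m).re with hF₁re
  have hq_le : ∀ (lam : RieffelB G) m, qR μ lam h₁ m ≤ F₁re m := fun lam m => (fact m).2 lam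
  have hF₁re_nonneg : ∀ m, 0 ≤ F₁re m := fun m => by
    have := hq_le (lamZero G) m
    rwa [qR_lamZero] at this
  have hF₁re_le : ∀ m, F₁re m ≤ ‖F₁‖ := fun m => by
    refine (Complex.re_le_norm _).trans ?_
    exact F₁.norm_coe_le_norm m
  have hF₁m : ∀ m, F₁ m = ((F₁re m : ℝ) : ℂ) := fun m =>
    Complex.ext (by simp [hF₁re]) (by simp [(fact m).1])
  -- the supremum
  set S : M → Set ℝ := fun m => Set.range fun lam : RieffelB G => qR μ lam h₁₂ m with hS
  have hSne : ∀ m, (S m).Nonempty := fun m => ⟨_, ⟨lamZero G, rfl⟩⟩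
  have hub : ∀ m (lam : RieffelB G), qR μ lam h₁₂ m ≤ ‖h₂‖ * F₁re m := by
    intro m lam
    have h1 := qR_mul_diff_le μ h₁ h₂ h₁pos h₂pos
      (lam := lamZero G) (lam'' := lam) (fun x => lam_nonneg lam x) m
    rw [qR_lamZero, qR_lamZero] at h1
    have h2 : qR μ lam h₁ m ≤ F₁re m := hq_le lam m
    nlinarith [norm_nonneg h₂]
  have hbdd : ∀ m, BddAbove (S m) := fun m =>
    ⟨‖h₂‖ * F₁re m, by rintro _ ⟨lam, rfl⟩; exact hub m lam⟩
  set Fv : M → ℝ := fun m => sSup (S m) with hFv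
  have hFv_ge : ∀ m (lam : RieffelB G), qR μ lam h₁₂ m ≤ Fv m := fun m lam =>
    le_csSup (hbdd m) ⟨lam, rfl⟩
  have hFv_nonneg : ∀ m, 0 ≤ Fv m := fun m => by
    have := hFv_ge m (lamZero G)
    rwa [qR_lamZero] at this
  have hFv_le : ∀ m, Fv m ≤ ‖h₂‖ * F₁re m := fun m =>
    csSup_le (hSne m) (by rintro _ ⟨lam, rfl⟩; exact hub m lam)
  -- key inequality
  have keyB : ∀ (lam : RieffelB G) m,
      Fv m - qR μ lam h₁₂ m ≤ ‖h₂‖ * (F₁re m - qR μ lam h₁ m) := by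
    intro lam m
    have hall : ∀ lam' : RieffelB G,
        qR μ lam' h₁₂ m ≤ qR μ lam h₁₂ m + ‖h₂‖ * (F₁re m - qR μ lam h₁ m) := by
      intro lam'
      have h1 : qR μ lam' h₁₂ m ≤ qR μ (lamSup lam lam') h₁₂ m :=
        qR_mono μ h₁₂ h₁₂pos (le_lamSup_right _ _) m
      have h2 := qR_mul_diff_le μ h₁ h₂ h₁pos h₂pos (le_lamSup_left lam lam') m
      have h3 : qR μ (lamSup lam lam') h₁ m ≤ F₁re m := hq_le _ m
      rw [← hh₁₂] at h2
      nlinarith [norm_nonneg h₂]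
    have := csSup_le (hSne m) (by rintro _ ⟨lam', rfl⟩; exact hall lam')
    linarith
  have normEq : ∀ (z : ℂ) (a b : ℝ), ‖z * (a : ℂ) - z * (b : ℂ)‖ = ‖z‖ * |a - b| := by
    intro z a b
    rw [← mul_sub, ← Complex.ofReal_sub, norm_mul, Complex.norm_real, Real.norm_eq_abs]
  -- the convergence property
  have conv : ∀ k : C₀(M, ℂ), ∀ ε > (0 : ℝ), ∃ lam₀ : RieffelB G,
      ∀ lam : RieffelB G, lam₀ ≤ lam → ∀ m,
      ‖k m * ((qR μ lam h₁₂ m : ℝ) : ℂ) - k m * ((Fv m : ℝ) : ℂ)‖ ≤ ε := by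
    intro k ε hε
    have hd0 : (0:ℝ) < ‖h₂‖ + 1 := by positivity
    obtain ⟨lam₀, hlam₀⟩ := hF₁ k (ε / (‖h₂‖ + 1)) (by positivity)
    refine ⟨lam₀, fun lam hle m => ?_⟩
    have hb := hlam₀ lam hle m
    rw [pLamC0_eq μ lam h₁ h₁pos m, hF₁m m, normEq] at hb
    calc ‖k m * ((qR μ lam h₁₂ m : ℝ) : ℂ) - k m * ((Fv m : ℝ) : ℂ)‖
        = ‖k m‖ * |qR μ lam h₁₂ m - Fv m| := normEq _ _ _
      _ = ‖k m‖ * (Fv m - qR μ lam h₁₂ m) := by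
          rw [abs_sub_comm, abs_of_nonneg (sub_nonneg.2 (hFv_ge m lam))]
      _ ≤ ‖k m‖ * (‖h₂‖ * (F₁re m - qR μ lam h₁ m)) :=
          mul_le_mul_of_nonneg_left (keyB lam m) (norm_nonneg _)
      _ = ‖h₂‖ * (‖k m‖ * |qR μ lam h₁ m - F₁re m|) := by
          rw [abs_sub_comm, abs_of_nonneg (sub_nonneg.2 (hq_le lam m))]; ring
      _ ≤ ‖h₂‖ * (ε / (‖h₂‖ + 1)) := mul_le_mul_of_nonneg_left hb (norm_nonneg _)
      _ ≤ (‖h₂‖ + 1) * (ε / (‖h₂‖ + 1)) := by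
          have : (0:ℝ) ≤ ε / (‖h₂‖ + 1) := by positivity
          nlinarith
      _ = ε := mul_div_cancel₀ ε (ne_of_gt hd0)
  -- continuity of Fv
  have hFvcont : Continuous Fv := by
    rw [continuous_iff_continuousAt]
    intro m₀
    obtain ⟨N, hNc, hNmem⟩ := exists_compact_mem_nhds m₀
    obtain ⟨k, hk⟩ := exists_localizer hNc
    rw [ContinuousAt, Metric.tendsto_nhds]
    intro ε hε
    obtain ⟨lam₀, hlam₀⟩ := conv k (ε/4) (by positivity)
    have hq := hlam₀ lam₀ (le_refl _)
    have hqabs : ∀ m ∈ N, |qR μ lam₀ h₁₂ m - Fv m| ≤ ε/4 := by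
      intro m hm
      have := hq m
      rw [normEq, hk m hm, norm_one, one_mul] at this
      exact this
    have hev : ∀ᶠ m in 𝓝 m₀, |qR μ lam₀ h₁₂ m - qR μ lam₀ h₁₂ m₀| < ε/4 := by
      have := Metric.tendsto_nhds.1 ((qR_continuous μ lam₀ h₁₂).tendsto m₀) (ε/4)
        (by positivity)
      simpa [Real.dist_eq] using this
    filter_upwards [hev, hNmem] with m h1 h2
    rw [Real.dist_eq]
    have e1 := hqabs m h2
    have e2 := hqabs m₀ (mem_of_mem_nhds hNmem)
    have t1 : |Fv m - Fv m₀| ≤ |Fv m - qR μ lam₀ h₁₂ m| + |qR μ lam₀ h₁₂ m - Fv m₀| :=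
      abs_sub_le _ _ _
    have t2 : |qR μ lam₀ h₁₂ m - Fv m₀| ≤
        |qR μ lam₀ h₁₂ m - qR μ lam₀ h₁₂ m₀| + |qR μ lam₀ h₁₂ m₀ - Fv m₀| :=
      abs_sub_le _ _ _
    rw [abs_sub_comm] at e1
    calc |Fv m - Fv m₀| ≤ _ := t1
      _ ≤ ε/4 + (ε/4 + ε/4) := by
          refine add_le_add e1 (t2.trans (add_le_add h1.le e2))
      _ < ε := by linarith
  -- package into a bounded continuous function
  set FC : M →ᵇ ℂ := BoundedContinuousFunction.ofNormedAddCommGroup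
    (fun m => ((Fv m : ℝ) : ℂ)) (Complex.continuous_ofReal.comp hFvcont) (‖h₂‖ * ‖F₁‖)
    (fun m => by
      rw [Complex.norm_real, Real.norm_eq_abs, abs_of_nonneg (hFv_nonneg m)]
      exact (hFv_le m).trans (mul_le_mul_of_nonneg_left (hF₁re_le m) (norm_nonneg _)))
    with hFC
  have hFCapp : ∀ m, FC m = ((Fv m : ℝ) : ℂ) := fun m => rfl
  refine ⟨FC, ?_, ?_, ?_⟩
  · intro k ε hε
    obtain ⟨lam₀, hlam₀⟩ := conv k ε hε
    refine ⟨lam₀, fun lam hle m => ?_⟩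
    rw [pLamC0_eq μ lam h₁₂ h₁₂pos m, hFCapp]
    exact hlam₀ lam hle m
  · intro x m
    rw [hFCapp, hFCapp]
    have hSet : S (x • m) = S m := by
      ext r
      constructor
      · rintro ⟨lam, rfl⟩
        exact ⟨lamTrans x lam, (qR_smul μ lam h₁₂ x m).symm⟩
      · rintro ⟨lam, rfl⟩
        refine ⟨lamTrans x⁻¹ lam, ?_⟩
        show qR μ (lamTrans x⁻¹ lam) h₁₂ (x • m) = qR μ lam h₁₂ m
        rw [qR_smul μ (lamTrans x⁻¹ lam) h₁₂ x m, lamTrans_lamTrans]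
    show ((sSup (S (x • m)) : ℝ) : ℂ) = ((sSup (S m) : ℝ) : ℂ)
    rw [hSet]
  · intro ε hε
    have hd0 : (0:ℝ) < ‖F₁‖ + 1 := by positivity
    have hδ0 : (0:ℝ) < ε / (‖F₁‖ + 1) := by positivity
    have hco := Metric.tendsto_nhds.1 h₂.zero_at_infty' (ε / (‖F₁‖ + 1)) hδ0
    obtain ⟨K, hKc, hK⟩ := mem_cocompact.1 hco
    refine ⟨K, hKc, fun m hm => ?_⟩
    have hb : ∀ lam : RieffelB G, qR μ lam h₁₂ m ≤ (ε / (‖F₁‖ + 1)) * ‖F₁‖ := by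
      intro lam
      have step : qR μ lam h₁₂ m ≤ (ε / (‖F₁‖ + 1)) * qR μ lam h₁ m := by
        rw [hh₁₂, qR, qR, ← integral_const_mul]
        apply integral_mono (integrable_qR μ lam (h₁ * h₂) m)
          ((integrable_qR μ lam h₁ m).const_mul _)
        intro x
        simp only
        rw [re_mul h₁ h₂ h₁pos h₂pos]
        have hx : x⁻¹ • m ∈ Kᶜ := hm x⁻¹
        have hdist := hK hx
        have h2small : (h₂ (x⁻¹ • m)).re < ε / (‖F₁‖ + 1) := by
          have hnorm : ‖h₂ (x⁻¹ • m)‖ < ε / (‖F₁‖ + 1) := by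
            simpa [dist_zero_right] using hdist
          refine lt_of_le_of_lt ?_ hnorm
          refine (Complex.re_le_norm _).trans ?_
          exact le_rfl
        have hre1 : 0 ≤ (h₁ (x⁻¹ • m)).re := (Complex.nonneg_iff.1 (h₁pos _)).1
        have hl0 : 0 ≤ lam.1 x := lam_nonneg lam x
        nlinarith [mul_nonneg hl0 hre1]
      have h3 : qR μ lam h₁ m ≤ ‖F₁‖ := (hq_le lam m).trans (hF₁re_le m)
      calc qR μ lam h₁₂ m ≤ (ε / (‖F₁‖ + 1)) * qR μ lam h₁ m := step
        _ ≤ (ε / (‖F₁‖ + 1)) * ‖F₁‖ := mul_le_mul_of_nonneg_left h3 hδ0.le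
    have hFvm : Fv m ≤ (ε / (‖F₁‖ + 1)) * ‖F₁‖ :=
      csSup_le (hSne m) (by rintro _ ⟨lam, rfl⟩; exact hb lam)
    rw [hFCapp, Complex.norm_real, Real.norm_eq_abs, abs_of_nonneg (hFv_nonneg m)]
    calc Fv m ≤ (ε / (‖F₁‖ + 1)) * ‖F₁‖ := hFvm
      _ ≤ (ε / (‖F₁‖ + 1)) * (‖F₁‖ + 1) := by nlinarith
      _ = ε := div_mul_cancel₀ ε (ne_of_gt hd0)
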